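/- arXiv:2412.05164 — 3 statements merged into one kernel-verified Lean document; each statement's English description precedes it below -/
import Mathlib

section
/- For every real b > 0, all reals s, s', and every measurable set A ⊆ ℝ, the output distributions of the Laplace mechanism at the two inputs satisfy ∫_A (1/(2b))·exp(−|x − s|/b) dx ≤ exp(|s − s'|/b) · ∫_A (1/(2b))·exp(−|x − s'|/b) dx. -/
open MeasureTheory

lemma integrable_exp_neg_abs_div (b : ℝ) (hb : 0 < b) :
    Integrable (fun x : ℝ => Real.exp (-|x| / b)) := by
  have hIoi : IntegrableOn (fun x : ℝ => Real.exp (-|x| / b)) (Set.Ioi 0) := by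
    have h := exp_neg_integrableOn_Ioi 0 (show (0:ℝ) < 1/b by positivity)
    refine h.congr_fun (fun x hx => ?_) measurableSet_Ioi
    rw [abs_of_pos hx]; ring_nf
  have hIic : IntegrableOn (fun x : ℝ => Real.exp (-|x| / b)) (Set.Iic 0) := by
    rw [← Measure.map_neg_eq_self (volume : Measure ℝ)]
    have m : MeasurableEmbedding fun x : ℝ => -x :=
      (Homeomorph.neg ℝ).measurableEmbedding
    rw [m.integrableOn_map_iff]
    simp_rw [Function.comp_def, abs_neg, Set.neg_preimage, Set.neg_Iic, neg_zero]
    exact Iff.mpr integrableOn_Ici_iff_integrableOn_Ioi hIoi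
  have h := hIic.union hIoi
  rwa [Set.Iic_union_Ioi, integrableOn_univ] at h

/-- Differential privacy of the Laplace mechanism: for every measurable set `A`,
the probability of landing in `A` under input `s` is at most `exp(|s − s'|/b)`
times the probability under input `s'`. -/
theorem laplace_mechanism_dp (b : ℝ) (hb : 0 < b) (s s' : ℝ) (A : Set ℝ)
    (hA : MeasurableSet A) :
    ∫ x in A, (1 / (2 * b)) * Real.exp (-|x - s| / b) ≤
      Real.exp (|s - s'| / b) *
        ∫ x in A, (1 / (2 * b)) * Real.exp (-|x - s'| / b) := by
  have hint : ∀ t : ℝ,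
      Integrable (fun x : ℝ => (1 / (2 * b)) * Real.exp (-|x - t| / b)) := fun t =>
    ((integrable_exp_neg_abs_div b hb).comp_sub_right t).const_mul _
  rw [← integral_const_mul]
  refine setIntegral_mono_on (hint s).integrableOn ((hint s').const_mul _).integrableOn hA
    (fun x _ => ?_)
  have key : Real.exp (-|x - s| / b) ≤ Real.exp (|s - s'| / b) * Real.exp (-|x - s'| / b) := by
    rw [← Real.exp_add, Real.exp_le_exp, ← add_div]
    have h3 : |x - s'| ≤ |x - s| + |s - s'| := abs_sub_le x s s'
    have h4 : -|x - s| ≤ |s - s'| + -|x - s'| := by linarith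
    exact div_le_div_of_nonneg_right h4 hb.le
  calc (1 / (2 * b)) * Real.exp (-|x - s| / b)
      ≤ (1 / (2 * b)) * (Real.exp (|s - s'| / b) * Real.exp (-|x - s'| / b)) :=
        mul_le_mul_of_nonneg_left key (by positivity)
    _ = Real.exp (|s - s'| / b) * ((1 / (2 * b)) * Real.exp (-|x - s'| / b)) := by ring
end

section
/- For every real ε > 0, every real α > 0, and every natural number n ≥ 1, the expected noise mean-squared error of the time-indexed Laplace mechanism satisfies (1/n)·∑_{i=1}^{n} 2/(ε²·(1 + α·i)²) ≤ 2/(n·α·ε²). -/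
lemma dp_km_sum_aux (α : ℝ) (hα : 0 < α) (n : ℕ) :
    ∑ i ∈ Finset.Icc 1 n, 1 / (1 + α * (i : ℝ)) ^ 2 ≤
      (1 / α) * (1 - 1 / (1 + α * n)) := by
  induction n with
  | zero => simp
  | succ n ih =>
    have hpos : ∀ m : ℕ, (0:ℝ) < 1 + α * m := by
      intro m; positivity
    rw [Finset.sum_Icc_succ_top (by omega)]
    have key : 1 / (1 + α * ((n+1 : ℕ) : ℝ)) ^ 2 ≤
        (1 / α) * (1 / (1 + α * n) - 1 / (1 + α * (n+1 : ℕ))) := by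
      have h1 : (0:ℝ) < 1 + α * n := hpos n
      have h2 : (0:ℝ) < 1 + α * ((n+1:ℕ):ℝ) := hpos (n+1)
      have hc : ((n+1:ℕ):ℝ) = (n:ℝ) + 1 := by push_cast; ring
      rw [hc] at h2 ⊢
      have hrhs : (1 / α) * (1 / (1 + α * n) - 1 / (1 + α * ((n:ℝ)+1))) =
          1 / ((1 + α * n) * (1 + α * ((n:ℝ)+1))) := by
        field_simp
        ring
      rw [hrhs]
      apply div_le_div_of_nonneg_left (by norm_num) (by positivity)
      nlinarith [sq_nonneg α, hα.le]
    calc ∑ i ∈ Finset.Icc 1 n, 1 / (1 + α * (i : ℝ)) ^ 2 +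
          1 / (1 + α * ((n+1:ℕ):ℝ)) ^ 2
        ≤ (1 / α) * (1 - 1 / (1 + α * n)) +
          (1 / α) * (1 / (1 + α * n) - 1 / (1 + α * (n+1:ℕ))) :=
          add_le_add ih key
      _ = (1 / α) * (1 - 1 / (1 + α * (n+1:ℕ))) := by ring

/-- The expected noise mean-squared error of the time-indexed Laplace
mechanism is at most `2/(n·α·ε²)`. -/
theorem dp_km_noise_mse_bound (ε α : ℝ) (hε : 0 < ε) (hα : 0 < α)
    (n : ℕ) (hn : 1 ≤ n) :
    (1 / (n : ℝ)) * ∑ i ∈ Finset.Icc 1 n, 2 / (ε ^ 2 * (1 + α * (i : ℝ)) ^ 2) ≤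
      2 / ((n : ℝ) * α * ε ^ 2) := by
  have hn' : (0:ℝ) < n := by exact_mod_cast hn
  have hsum : ∑ i ∈ Finset.Icc 1 n, 2 / (ε ^ 2 * (1 + α * (i : ℝ)) ^ 2) ≤
      2 / (α * ε ^ 2) := by
    have h := dp_km_sum_aux α hα n
    have heq : ∑ i ∈ Finset.Icc 1 n, 2 / (ε ^ 2 * (1 + α * (i : ℝ)) ^ 2) =
        (2 / ε ^ 2) * ∑ i ∈ Finset.Icc 1 n, 1 / (1 + α * (i : ℝ)) ^ 2 := by
      rw [Finset.mul_sum]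
      exact Finset.sum_congr rfl fun i _ => by
        rw [div_mul_div_comm]; ring_nf
    rw [heq]
    have h2 : (2 / ε ^ 2) * ((1 / α) * (1 - 1 / (1 + α * n))) ≤ 2 / (α * ε ^ 2) := by
      have hpos : (0:ℝ) < 1 + α * n := by positivity
      have : 1 - 1 / (1 + α * n) ≤ 1 := by
        have : 0 < 1 / (1 + α * n) := by positivity
        linarith
      calc (2 / ε ^ 2) * ((1 / α) * (1 - 1 / (1 + α * n)))
          ≤ (2 / ε ^ 2) * ((1 / α) * 1) := by
            apply mul_le_mul_of_nonneg_left _ (by positivity)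
            apply mul_le_mul_of_nonneg_left this (by positivity)
        _ = 2 / (α * ε ^ 2) := by field_simp
    refine le_trans ?_ h2
    exact mul_le_mul_of_nonneg_left h (by positivity)
  calc (1 / (n : ℝ)) * ∑ i ∈ Finset.Icc 1 n, 2 / (ε ^ 2 * (1 + α * (i : ℝ)) ^ 2)
      ≤ (1 / (n : ℝ)) * (2 / (α * ε ^ 2)) :=
        mul_le_mul_of_nonneg_left hsum (by positivity)
    _ = 2 / ((n : ℝ) * α * ε ^ 2) := by field_simp
end

section
/- For every real ε > 0, every real α > 0, and every natural number n ≥ 1, if the total privacy budget is ε̂ = ε·(n+1)·(1 + α·n/2), then the expected noise mean-squared error satisfies (1/n)·∑_{i=1}^{n} 2/(ε²·(1 + α·i)²) ≤ 2·(n+1)²·(1 + α·n/2)² / (n·α·ε̂²). -/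
lemma dp_km_tele (α : ℝ) (hα : 0 < α) (n : ℕ) :
    ∑ i ∈ Finset.Icc 1 n, 1 / (1 + α * (i : ℝ)) ^ 2 ≤
      (1 / α) * (1 - 1 / (1 + α * (n : ℝ))) := by
  induction n with
  | zero => simp
  | succ n ih =>
    rw [Finset.sum_Icc_succ_top (by omega : 1 ≤ n + 1)]
    have ha : (0:ℝ) < 1 + α * n := by positivity
    have hb : (0:ℝ) < 1 + α * (n + 1) := by positivity
    have hstep : 1 / (1 + α * ((n:ℝ) + 1)) ^ 2 ≤
        (1 / α) * (1 / (1 + α * (n:ℝ)) - 1 / (1 + α * ((n:ℝ) + 1))) := by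
      have heq : (1 / α) * (1 / (1 + α * (n:ℝ)) - 1 / (1 + α * ((n:ℝ) + 1)))
          = 1 / ((1 + α * (n:ℝ)) * (1 + α * ((n:ℝ) + 1))) := by
        field_simp
        ring
      rw [heq, sq]
      exact one_div_le_one_div_of_le (mul_pos ha hb)
        (mul_le_mul_of_nonneg_right (by linarith) hb.le)
    push_cast
    linarith

/-- The expected noise mean-squared error of the time-indexed Laplace
mechanism, expressed in terms of the total privacy budget
`ε̂ = ε·(n+1)·(1 + α·n/2)`. -/
theorem dp_km_noise_mse_bound_total_budget (ε α : ℝ) (hε : 0 < ε) (hα : 0 < α)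
    (n : ℕ) (hn : 1 ≤ n) (εhat : ℝ)
    (hεhat : εhat = ε * ((n : ℝ) + 1) * (1 + α * (n : ℝ) / 2)) :
    (1 / (n : ℝ)) * ∑ i ∈ Finset.Icc 1 n, 2 / (ε ^ 2 * (1 + α * (i : ℝ)) ^ 2) ≤
      2 * ((n : ℝ) + 1) ^ 2 * (1 + α * (n : ℝ) / 2) ^ 2 /
        ((n : ℝ) * α * εhat ^ 2) := by
  have hn' : (0:ℝ) < n := by
    have : (1:ℝ) ≤ n := by exact_mod_cast hn
    linarith
  have hX : (0:ℝ) < 1 + α * (n:ℝ) / 2 := by positivity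
  have hN : (0:ℝ) < 1 + α * (n:ℝ) := by positivity
  have hsum : ∑ i ∈ Finset.Icc 1 n, 2 / (ε ^ 2 * (1 + α * (i : ℝ)) ^ 2)
      = (2 / ε ^ 2) * ∑ i ∈ Finset.Icc 1 n, 1 / (1 + α * (i : ℝ)) ^ 2 := by
    rw [Finset.mul_sum]
    refine Finset.sum_congr rfl fun i _ => ?_
    have : (0:ℝ) < 1 + α * (i:ℝ) := by positivity
    field_simp
  have hb := dp_km_tele α hα n
  have hb2 : ∑ i ∈ Finset.Icc 1 n, 1 / (1 + α * (i : ℝ)) ^ 2 ≤ 1 / α := by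
    have : (0:ℝ) < 1 / (1 + α * (n:ℝ)) := by positivity
    have h1 : (1 - 1 / (1 + α * (n:ℝ))) ≤ 1 := by linarith
    calc _ ≤ (1 / α) * (1 - 1 / (1 + α * (n:ℝ))) := hb
      _ ≤ (1/α) * 1 := by
        apply mul_le_mul_of_nonneg_left h1 (by positivity)
      _ = 1/α := mul_one _
  have hRHS : 2 * ((n : ℝ) + 1) ^ 2 * (1 + α * (n : ℝ) / 2) ^ 2 /
        ((n : ℝ) * α * εhat ^ 2) = (1/(n:ℝ)) * ((2 / ε^2) * (1/α)) := by
    subst hεhat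
    field_simp
  rw [hsum, hRHS]
  apply mul_le_mul_of_nonneg_left _ (by positivity)
  apply mul_le_mul_of_nonneg_left hb2 (by positivity)
end
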